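/- arXiv:1910.08163 — 3 statements merged into one kernel-verified Lean document; each statement's English description precedes it below -/
import Mathlib

section
/- Let I be a nonempty finite set and a : I × I → ℤ. Let S := { x : I → ℤ | x(i) − x(j) ≥ a(i,i) − a(i,j) for all i, j ∈ I }. Then S is integrally tropically convex: for all x, y ∈ S and all integers c, d, the function i ↦ min(c + x(i), d + y(i)) again lies in S. -/
set_option linter.unusedSectionVars false

theorem statement6 {I : Type*} [Fintype I] [Nonempty I] (a : I → I → ℤ)
    (S : Set (I → ℤ)) (hS : S = {x : I → ℤ | ∀ i j, a i i - a i j ≤ x i - x j})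
    (x y : I → ℤ) (hx : x ∈ S) (hy : y ∈ S) (c d : ℤ) :
    (fun i => min (c + x i) (d + y i)) ∈ S := by
  subst hS
  intro i j
  have h1 := hx i j
  have h2 := hy i j
  simp only [Set.mem_setOf_eq] at *
  rcases le_total (c + x i) (d + y i) with h | h <;>
  rcases le_total (c + x j) (d + y j) with h' | h' <;>
  simp [min_eq_left, min_eq_right, *] <;> omega
end

section
/- Let I be a nonempty finite set and a : I × I → ℤ, and let S := { x : I → ℤ | x(i) − x(j) ≥ a(i,i) − a(i,j) for all i, j ∈ I }. Then every x ∈ S satisfies, for every j ∈ I, x(j) = min over i ∈ I of ( x(i) − a(i,i) + a(i,j) ). In particular every element of S is an integral tropical combination of the rows a(i,·) of a, i.e. S is contained in { j ↦ min over i ∈ I of (c(i) + a(i,j)) : c : I → ℤ }. -/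
set_option linter.unusedSectionVars false

theorem statement7 {I : Type*} [Fintype I] [Nonempty I] (a : I → I → ℤ)
    (x : I → ℤ) (hx : ∀ i j, a i i - a i j ≤ x i - x j) :
    (∀ j, x j = Finset.univ.inf' Finset.univ_nonempty (fun i => x i - a i i + a i j)) ∧
    (∃ c : I → ℤ, ∀ j,
      x j = Finset.univ.inf' Finset.univ_nonempty (fun i => c i + a i j)) := by
  have key : ∀ j, x j = Finset.univ.inf' Finset.univ_nonempty
      (fun i => x i - a i i + a i j) := by
    intro j
    apply le_antisymm
    · apply Finset.le_inf'
      intro i _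
      have := hx i j
      omega
    · exact Finset.inf'_le _ (Finset.mem_univ j) |>.trans (by omega)
  exact ⟨key, ⟨fun i => x i - a i i, fun j => by simpa [sub_add_eq_add_sub] using key j⟩⟩
end

section
/- Let I be a nonempty finite set and a : I × I → ℤ. Let S := { x : I → ℤ | x(i) − x(j) ≥ a(i,i) − a(i,j) for all i, j ∈ I } and let H := { j ↦ min over i ∈ I of (c(i) + a(i,j)) : c : I → ℤ } be the set of integral tropical combinations of the rows of a. Then S = H if and only if a(k,i) − a(k,j) ≥ a(i,i) − a(i,j) for all i, j, k ∈ I. -/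
set_option linter.unusedSectionVars false

theorem statement8 {I : Type*} [Fintype I] [Nonempty I] (a : I → I → ℤ) :
    ({x : I → ℤ | ∀ i j, a i i - a i j ≤ x i - x j} =
      {x : I → ℤ | ∃ c : I → ℤ, ∀ j,
        x j = Finset.univ.inf' Finset.univ_nonempty (fun i => c i + a i j)}) ↔
    (∀ i j k, a i i - a i j ≤ a k i - a k j) := by
  classical
  constructor
  · intro hEq i j k
    set M : ℤ := Finset.univ.sup' Finset.univ_nonempty
      (fun p : I × I => a k p.2 - a p.1 p.2) with hM
    set c : I → ℤ := fun i => if i = k then 0 else M with hc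
    have hval : ∀ j, Finset.univ.inf' Finset.univ_nonempty (fun i => c i + a i j) = a k j := by
      intro j
      apply le_antisymm
      · have := Finset.inf'_le (fun i => c i + a i j) (Finset.mem_univ k)
        exact this.trans_eq (by simp [hc])
      · apply Finset.le_inf'
        intro i _
        by_cases h : i = k
        · simp [hc, h]
        · have : a k j - a i j ≤ M := by
            apply Finset.le_sup' (f := fun p : I × I => a k p.2 - a p.1 p.2)
              (Finset.mem_univ (i, j))
          simp only [hc, if_neg h]
          linarith
    have hxH : (fun j => a k j) ∈
        {x : I → ℤ | ∃ c : I → ℤ, ∀ j,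
          x j = Finset.univ.inf' Finset.univ_nonempty (fun i => c i + a i j)} := by
      exact ⟨c, fun j => (hval j).symm⟩
    rw [← hEq] at hxH
    exact hxH i j
  · intro h
    ext x
    constructor
    · intro hx
      refine ⟨fun i => x i - a i i, fun j => ?_⟩
      apply le_antisymm
      · apply Finset.le_inf'
        intro i _
        have := hx i j
        simp only []
        linarith
      · have := Finset.inf'_le (fun i => x i - a i i + a i j) (Finset.mem_univ j)
        exact this.trans_eq (by simp)
    · rintro ⟨c, hc⟩ i j
      obtain ⟨m, -, hm⟩ := Finset.exists_mem_eq_inf' (Finset.univ_nonempty (α := I))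
        (fun i => c i + a i i)
      -- achiever for coordinate i
      obtain ⟨m, -, hm⟩ := Finset.exists_mem_eq_inf' (Finset.univ_nonempty (α := I))
        (fun k => c k + a k i)
      have hxi : x i = c m + a m i := by rw [hc i, hm]
      have hxj : x j ≤ c m + a m j :=
        (hc j).le.trans (Finset.inf'_le _ (Finset.mem_univ m))
      have := h i j m
      linarith
end
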